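/- Let M be a symmetric positive definite n×n real matrix, let D, Θ_y, Θ_w, Θ_v be n×n diagonal matrices with strictly positive diagonal entries, let α > 0, and let L be any n×n real matrix. Set Θ := α Θ_w⁻¹ + α Θ_v⁻¹, define S := L (M + Θ_y)⁻¹ Lᵀ + (1/α) [M − (Θ + M⁻¹)⁻¹], define the diagonal matrix M̂ := [(1/α) (D − (Θ + D⁻¹)⁻¹)]^{1/2} (D + Θ_y)^{1/2} (entrywise diagonal square roots of diagonal positive definite matrices), define Ŝ := (L + M̂) (M + Θ_y)⁻¹ (L + M̂)ᵀ, and let r := min over nonzero v of (vᵀ [M − (Θ + M⁻¹)⁻¹] v) / (vᵀ [D − (Θ + D⁻¹)⁻¹] v). Then for every vector v, vᵀ S v ≥ (1/2) · min{ r · min{λmin(D⁻¹M), 1}, 1} · vᵀ Ŝ v. -/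

import Mathlib

open Matrix

/-- The set of Rayleigh quotients `(vᵀ P v)/(vᵀ Q v)` over nonzero real vectors `v`.
For `P = M` symmetric positive definite and `Q = D` diagonal positive definite,
`sInf` of this set is `λmin(D⁻¹M)`. -/
def rayleighSet {n : ℕ} (P Q : Matrix (Fin n) (Fin n) ℝ) : Set ℝ :=
  {r | ∃ v : Fin n → ℝ, v ≠ 0 ∧ r = (v ⬝ᵥ (P *ᵥ v)) / (v ⬝ᵥ (Q *ᵥ v))}

namespace SchurAux

variable {n : ℕ}

lemma pd_dot {A : Matrix (Fin n) (Fin n) ℝ} (hA : A.PosDef) {v : Fin n → ℝ} (hv : v ≠ 0) :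
    0 < v ⬝ᵥ (A *ᵥ v) := by simpa using hA.dotProduct_mulVec_pos hv

lemma psd_dot {A : Matrix (Fin n) (Fin n) ℝ} (hA : A.PosSemidef) (v : Fin n → ℝ) :
    0 ≤ v ⬝ᵥ (A *ᵥ v) := by simpa using hA.dotProduct_mulVec_nonneg v

lemma herm_t {A : Matrix (Fin n) (Fin n) ℝ} (h : A.IsHermitian) : Aᵀ = A := by
  ext i j; simpa using (h.apply i j)

lemma dot_symm {A : Matrix (Fin n) (Fin n) ℝ} (hA : Aᵀ = A) (x y : Fin n → ℝ) :
    x ⬝ᵥ (A *ᵥ y) = y ⬝ᵥ (A *ᵥ x) := by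
  rw [dotProduct_mulVec, ← mulVec_transpose, hA, dotProduct_comm]

/-- Cauchy–Schwarz for a PSD quadratic form. -/
lemma cs {A : Matrix (Fin n) (Fin n) ℝ} (hA : A.PosSemidef) (x y : Fin n → ℝ) :
    (x ⬝ᵥ (A *ᵥ y))^2 ≤ (x ⬝ᵥ (A *ᵥ x)) * (y ⬝ᵥ (A *ᵥ y)) := by
  have hsym := herm_t hA.isHermitian
  have key : ∀ t : ℝ, 0 ≤ (y ⬝ᵥ (A *ᵥ y)) * (t * t) + (2 * (x ⬝ᵥ (A *ᵥ y))) * t +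
      (x ⬝ᵥ (A *ᵥ x)) := by
    intro t
    have h := psd_dot hA (x + t • y)
    have hxy := dot_symm hsym x y
    simp only [mulVec_add, mulVec_smul, dotProduct_add, add_dotProduct, dotProduct_smul,
      smul_dotProduct, smul_eq_mul] at h
    rw [← hxy] at h
    nlinarith [h]
  have h := discrim_le_zero key
  rw [discrim] at h
  nlinarith [h]

/-- Monotonicity of inverses at the level of quadratic forms. -/
lemma inv_dot_le {B C : Matrix (Fin n) (Fin n) ℝ} (hB : B.PosDef) (hC : C.PosDef)
    (h : ∀ u, u ⬝ᵥ (B *ᵥ u) ≤ u ⬝ᵥ (C *ᵥ u)) (w : Fin n → ℝ) :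
    w ⬝ᵥ (C⁻¹ *ᵥ w) ≤ w ⬝ᵥ (B⁻¹ *ᵥ w) := by
  have hBdet : IsUnit B.det := isUnit_iff_ne_zero.mpr hB.det_pos.ne'
  have hCdet : IsUnit C.det := isUnit_iff_ne_zero.mpr hC.det_pos.ne'
  set u := C⁻¹ *ᵥ w with hu
  set z := B⁻¹ *ᵥ w with hz
  have hCu : C *ᵥ u = w := by
    rw [hu, mulVec_mulVec, Matrix.mul_nonsing_inv _ hCdet, one_mulVec]
  have hBz : B *ᵥ z = w := by
    rw [hz, mulVec_mulVec, Matrix.mul_nonsing_inv _ hBdet, one_mulVec]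
  have hBsym := herm_t hB.isHermitian
  have hCsym := herm_t hC.isHermitian
  have ht0 : 0 ≤ w ⬝ᵥ u := by
    have h1 := psd_dot hC.posSemidef u
    rw [hCu] at h1
    rwa [dotProduct_comm] at h1
  have hs0 : 0 ≤ w ⬝ᵥ z := by
    have h1 := psd_dot hB.posSemidef z
    rw [hBz] at h1
    rwa [dotProduct_comm] at h1
  have hwu : w ⬝ᵥ u = z ⬝ᵥ (B *ᵥ u) := by
    calc w ⬝ᵥ u = (B *ᵥ z) ⬝ᵥ u := by rw [hBz]
      _ = u ⬝ᵥ (B *ᵥ z) := dotProduct_comm _ _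
      _ = z ⬝ᵥ (B *ᵥ u) := dot_symm hBsym u z
  have hzz : z ⬝ᵥ (B *ᵥ z) = w ⬝ᵥ z := by
    rw [hBz]
    exact dotProduct_comm z w
  have huu : u ⬝ᵥ (B *ᵥ u) ≤ w ⬝ᵥ u := by
    have h1 := h u
    rw [hCu] at h1
    calc u ⬝ᵥ (B *ᵥ u) ≤ u ⬝ᵥ w := h1
      _ = w ⬝ᵥ u := dotProduct_comm _ _
  have hCS := cs hB.posSemidef z u
  have hfin : (w ⬝ᵥ u)^2 ≤ (w ⬝ᵥ z) * (w ⬝ᵥ u) := by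
    calc (w ⬝ᵥ u)^2 = (z ⬝ᵥ (B *ᵥ u))^2 := by rw [hwu]
    _ ≤ (z ⬝ᵥ (B *ᵥ z)) * (u ⬝ᵥ (B *ᵥ u)) := hCS
    _ ≤ (w ⬝ᵥ z) * (w ⬝ᵥ u) := by
        rw [hzz]
        exact mul_le_mul_of_nonneg_left huu hs0
  rcases eq_or_lt_of_le ht0 with h0 | h0
  · rw [← h0]; exact hs0
  · nlinarith [hfin]

lemma par {A : Matrix (Fin n) (Fin n) ℝ} (hA : A.PosSemidef) (x y : Fin n → ℝ) :
    (x + y) ⬝ᵥ (A *ᵥ (x + y)) ≤ 2 * (x ⬝ᵥ (A *ᵥ x)) + 2 * (y ⬝ᵥ (A *ᵥ y)) := by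
  have h := psd_dot hA (x - y)
  have hs := dot_symm (herm_t hA.isHermitian) x y
  simp only [mulVec_add, mulVec_sub, dotProduct_add, dotProduct_sub, add_dotProduct,
    sub_dotProduct] at h ⊢
  linarith

lemma quad_conj (A L : Matrix (Fin n) (Fin n) ℝ) (v : Fin n → ℝ) :
    v ⬝ᵥ ((L * A * Lᵀ) *ᵥ v) = (Lᵀ *ᵥ v) ⬝ᵥ (A *ᵥ (Lᵀ *ᵥ v)) := by
  rw [← mulVec_mulVec, ← mulVec_mulVec, dotProduct_mulVec, ← mulVec_transpose]

lemma diag_inv {g : Fin n → ℝ} (hg : ∀ i, g i ≠ 0) :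
    (Matrix.diagonal g)⁻¹ = Matrix.diagonal (fun i => (g i)⁻¹) := by
  refine inv_eq_right_inv ?_
  have hfun : (fun i => g i * (g i)⁻¹) = fun _ => (1:ℝ) := funext fun i => mul_inv_cancel₀ (hg i)
  rw [diagonal_mul_diagonal, hfun, diagonal_one]

lemma diag_form (g : Fin n → ℝ) (u : Fin n → ℝ) :
    u ⬝ᵥ ((Matrix.diagonal g) *ᵥ u) = ∑ i, g i * (u i)^2 := by
  simp only [dotProduct, mulVec_diagonal]
  exact Finset.sum_congr rfl fun i _ => by ring

/-- positive lower bound for the Rayleigh quotient of two positive definite matrices -/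
lemma exists_pos_lb {P Q : Matrix (Fin n) (Fin n) ℝ} (hP : P.PosDef) (hQ : Q.PosDef)
    (hn : 0 < n) :
    ∃ ε : ℝ, 0 < ε ∧ ∀ v : Fin n → ℝ, v ≠ 0 →
      ε ≤ (v ⬝ᵥ (P *ᵥ v)) / (v ⬝ᵥ (Q *ᵥ v)) := by
  have hfP : Continuous fun v : Fin n → ℝ => v ⬝ᵥ (P *ᵥ v) :=
    continuous_id.dotProduct (continuous_const.matrix_mulVec continuous_id)
  have hfQ : Continuous fun v : Fin n → ℝ => v ⬝ᵥ (Q *ᵥ v) :=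
    continuous_id.dotProduct (continuous_const.matrix_mulVec continuous_id)
  set Sph := Metric.sphere (0 : Fin n → ℝ) 1 with hSph
  have hne : ∀ v ∈ Sph, v ≠ 0 := by
    intro v hv
    have h1 : ‖v‖ = 1 := mem_sphere_zero_iff_norm.mp hv
    intro h0
    rw [h0] at h1
    simp at h1
  have hKc : IsCompact Sph := isCompact_sphere 0 1
  have hKne : Sph.Nonempty := by
    refine ⟨(Pi.single (⟨0, hn⟩ : Fin n) (1 : ℝ) : Fin n → ℝ), ?_⟩
    rw [hSph, mem_sphere_zero_iff_norm, Pi.norm_single]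
    simp
  have hcont : ContinuousOn
      (fun v : Fin n → ℝ => (v ⬝ᵥ (P *ᵥ v)) / (v ⬝ᵥ (Q *ᵥ v))) Sph := by
    exact (hfP.continuousOn).div (hfQ.continuousOn)
      (fun v hv => (pd_dot hQ (hne v hv)).ne')
  obtain ⟨v₀, hv₀S, hmin⟩ := hKc.exists_isMinOn hKne hcont
  refine ⟨(v₀ ⬝ᵥ (P *ᵥ v₀)) / (v₀ ⬝ᵥ (Q *ᵥ v₀)), ?_, ?_⟩
  · exact div_pos (pd_dot hP (hne v₀ hv₀S)) (pd_dot hQ (hne v₀ hv₀S))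
  · intro v hv
    have hnv : ‖v‖ ≠ 0 := norm_ne_zero_iff.mpr hv
    set c := ‖v‖⁻¹ with hc
    have hcne : c ≠ 0 := inv_ne_zero hnv
    have hmem : c • v ∈ Sph := by
      simp [hSph, mem_sphere_iff_norm, norm_smul, hc, abs_of_nonneg (inv_nonneg.mpr (norm_nonneg v)),
        inv_mul_cancel₀ hnv]
    have heq : ((c • v) ⬝ᵥ (P *ᵥ (c • v))) / ((c • v) ⬝ᵥ (Q *ᵥ (c • v))) =
        (v ⬝ᵥ (P *ᵥ v)) / (v ⬝ᵥ (Q *ᵥ v)) := by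
      simp only [mulVec_smul, dotProduct_smul, smul_dotProduct, smul_eq_mul]
      rw [show c * (c * (v ⬝ᵥ (P *ᵥ v))) = (c * c) * (v ⬝ᵥ (P *ᵥ v)) by ring,
        show c * (c * (v ⬝ᵥ (Q *ᵥ v))) = (c * c) * (v ⬝ᵥ (Q *ᵥ v)) by ring]
      exact mul_div_mul_left _ _ (mul_ne_zero hcne hcne)
    have hm : (v₀ ⬝ᵥ (P *ᵥ v₀)) / (v₀ ⬝ᵥ (Q *ᵥ v₀)) ≤
        ((c • v) ⬝ᵥ (P *ᵥ (c • v))) / ((c • v) ⬝ᵥ (Q *ᵥ (c • v))) := hmin hmem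
    rw [heq] at hm
    exact hm

lemma rayleigh_bddBelow {P Q : Matrix (Fin n) (Fin n) ℝ}
    (hP : ∀ u, 0 ≤ u ⬝ᵥ (P *ᵥ u)) (hQ : Q.PosDef) :
    ∀ x ∈ rayleighSet P Q, (0:ℝ) ≤ x := by
  rintro x ⟨v, hv, rfl⟩
  exact div_nonneg (hP v) (pd_dot hQ hv).le

/-- `sInf` of the Rayleigh set is a lower bound for all Rayleigh quotients. -/
lemma sInf_mul_le {P Q : Matrix (Fin n) (Fin n) ℝ}
    (hP : ∀ u, 0 ≤ u ⬝ᵥ (P *ᵥ u)) (hQ : Q.PosDef) (v : Fin n → ℝ) :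
    sInf (rayleighSet P Q) * (v ⬝ᵥ (Q *ᵥ v)) ≤ v ⬝ᵥ (P *ᵥ v) := by
  by_cases hv : v = 0
  · simp [hv]
  · have hg : 0 < v ⬝ᵥ (Q *ᵥ v) := pd_dot hQ hv
    have hle : sInf (rayleighSet P Q) ≤ (v ⬝ᵥ (P *ᵥ v)) / (v ⬝ᵥ (Q *ᵥ v)) :=
      csInf_le ⟨0, rayleigh_bddBelow hP hQ⟩ ⟨v, hv, rfl⟩
    calc sInf (rayleighSet P Q) * (v ⬝ᵥ (Q *ᵥ v))
        ≤ ((v ⬝ᵥ (P *ᵥ v)) / (v ⬝ᵥ (Q *ᵥ v))) * (v ⬝ᵥ (Q *ᵥ v)) :=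
          mul_le_mul_of_nonneg_right hle hg.le
      _ = v ⬝ᵥ (P *ᵥ v) := div_mul_cancel₀ _ hg.ne'

lemma rayleigh_sInf_pos {P Q : Matrix (Fin n) (Fin n) ℝ} (hP : P.PosDef) (hQ : Q.PosDef)
    (hn : 0 < n) : 0 < sInf (rayleighSet P Q) := by
  obtain ⟨ε, hε, hlb⟩ := exists_pos_lb hP hQ hn
  have hu₀ : (Pi.single (⟨0, hn⟩ : Fin n) (1:ℝ) : Fin n → ℝ) ≠ 0 := by
    intro h
    have h2 := congrFun h ⟨0, hn⟩
    simp at h2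
  have hne : (rayleighSet P Q).Nonempty := ⟨_, _, hu₀, rfl⟩
  have : ε ≤ sInf (rayleighSet P Q) := by
    refine le_csInf hne ?_
    rintro x ⟨v, hv, rfl⟩
    exact hlb v hv
  linarith

lemma rayleigh_nonneg {P Q : Matrix (Fin n) (Fin n) ℝ}
    (hP : ∀ u, 0 ≤ u ⬝ᵥ (P *ᵥ u)) (hQ : Q.PosDef)
    (hn : 0 < n) : 0 ≤ sInf (rayleighSet P Q) := by
  have hu₀ : (Pi.single (⟨0, hn⟩ : Fin n) (1:ℝ) : Fin n → ℝ) ≠ 0 := by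
    intro h
    have h2 := congrFun h ⟨0, hn⟩
    simp at h2
  have hne : (rayleighSet P Q).Nonempty := ⟨_, _, hu₀, rfl⟩
  exact le_csInf hne (rayleigh_bddBelow hP hQ)

end SchurAux

open SchurAux in
theorem consistent_preconditioned_schur_bound {n : ℕ}
    (M : Matrix (Fin n) (Fin n) ℝ) (hM : M.PosDef)
    (d dy dw dv : Fin n → ℝ)
    (hd : ∀ i, 0 < d i) (hdy : ∀ i, 0 < dy i) (hdw : ∀ i, 0 < dw i) (hdv : ∀ i, 0 < dv i)
    (α : ℝ) (hα : 0 < α)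
    (L : Matrix (Fin n) (Fin n) ℝ)
    (Θ S Mhat Shat : Matrix (Fin n) (Fin n) ℝ) (r : ℝ)
    (hΘ : Θ = α • (Matrix.diagonal dw)⁻¹ + α • (Matrix.diagonal dv)⁻¹)
    (hS : S = L * (M + Matrix.diagonal dy)⁻¹ * Lᵀ + α⁻¹ • (M - (Θ + M⁻¹)⁻¹))
    (hMhat : Mhat = Matrix.diagonal (fun i =>
      Real.sqrt ((α⁻¹ • (Matrix.diagonal d - (Θ + (Matrix.diagonal d)⁻¹)⁻¹)) i i) *
        Real.sqrt ((Matrix.diagonal d + Matrix.diagonal dy) i i)))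
    (hShat : Shat = (L + Mhat) * (M + Matrix.diagonal dy)⁻¹ * (L + Mhat)ᵀ)
    (hr : r = sInf (rayleighSet (M - (Θ + M⁻¹)⁻¹)
      (Matrix.diagonal d - (Θ + (Matrix.diagonal d)⁻¹)⁻¹))) :
    ∀ v : Fin n → ℝ,
      v ⬝ᵥ (S *ᵥ v) ≥
        1 / 2 * min (r * min (sInf (rayleighSet M (Matrix.diagonal d))) 1) 1 *
          (v ⬝ᵥ (Shat *ᵥ v)) := by
  intro v
  rcases Nat.eq_zero_or_pos n with hn0 | hn
  · subst hn0
    have hv : v = 0 := Subsingleton.elim _ _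
    simp [hv]
  -- abbreviations
  set lam := sInf (rayleighSet M (Matrix.diagonal d)) with hlam
  set μ := min lam 1 with hμ
  set c := min (r * μ) 1 with hc
  -- basic positive-definiteness facts
  have hDpd : (Matrix.diagonal d).PosDef := .diagonal hd
  have hDypd : (Matrix.diagonal dy).PosDef := .diagonal hdy
  -- Θ is diagonal with positive entries
  set θ : Fin n → ℝ := fun i => α * (dw i)⁻¹ + α * (dv i)⁻¹ with hθdef
  have hθpos : ∀ i, 0 < θ i := fun i => by
    have := hdw i; have := hdv i; positivity
  have hΘd : Θ = Matrix.diagonal θ := by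
    rw [hΘ, diag_inv (fun i => (hdw i).ne'), diag_inv (fun i => (hdv i).ne')]
    ext i j
    rcases eq_or_ne i j with rfl | hij
    · simp [hθdef, Matrix.diagonal_apply_eq]
    · simp [Matrix.diagonal_apply_ne _ hij]
  -- the diagonal matrix F
  have hθd : ∀ i, 0 < θ i + (d i)⁻¹ := fun i => by
    have := hθpos i; have := hd i; positivity
  have hTD : Θ + (Matrix.diagonal d)⁻¹ = Matrix.diagonal (fun i => θ i + (d i)⁻¹) := by
    rw [hΘd, diag_inv (fun i => (hd i).ne'), diagonal_add]
  set f : Fin n → ℝ := fun i => d i - (θ i + (d i)⁻¹)⁻¹ with hfdef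
  have hF : Matrix.diagonal d - (Θ + (Matrix.diagonal d)⁻¹)⁻¹ = Matrix.diagonal f := by
    rw [hTD, diag_inv (fun i => (hθd i).ne'), diagonal_sub]
  have hfpos : ∀ i, 0 < f i := by
    intro i
    have hb : 0 < (d i)⁻¹ := by have := hd i; positivity
    have hlt : (d i)⁻¹ < θ i + (d i)⁻¹ := lt_add_of_pos_left _ (hθpos i)
    have h1 : (θ i + (d i)⁻¹)⁻¹ < ((d i)⁻¹)⁻¹ := inv_strictAnti₀ hb hlt
    rw [inv_inv] at h1
    simp only [hfdef]
    linarith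
  have hFpd : (Matrix.diagonal f).PosDef := .diagonal hfpos
  have hFpd' : (Matrix.diagonal d - (Θ + (Matrix.diagonal d)⁻¹)⁻¹).PosDef := by
    rw [hF]; exact hFpd
  -- the matrix E = M - (Θ + M⁻¹)⁻¹ has a nonnegative quadratic form
  have hMinv : M⁻¹.PosDef := hM.inv
  have hΘpd : Θ.PosDef := by rw [hΘd]; exact .diagonal hθpos
  have hCpd : (Θ + M⁻¹).PosDef := hΘpd.add_posSemidef hMinv.posSemidef
  have hMdet : IsUnit M.det := isUnit_iff_ne_zero.mpr hM.det_pos.ne'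
  have hEform : ∀ u : Fin n → ℝ, u ⬝ᵥ ((Θ + M⁻¹)⁻¹ *ᵥ u) ≤ u ⬝ᵥ (M *ᵥ u) := by
    intro u
    have h1 := inv_dot_le hMinv hCpd (fun w => by
      have h2 := psd_dot hΘpd.posSemidef w
      rw [add_mulVec, dotProduct_add]
      linarith) u
    rwa [Matrix.nonsing_inv_nonsing_inv M hMdet] at h1
  have hEdot : ∀ u : Fin n → ℝ, 0 ≤ u ⬝ᵥ ((M - (Θ + M⁻¹)⁻¹) *ᵥ u) := by
    intro u
    rw [sub_mulVec, dotProduct_sub]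
    linarith [hEform u]
  -- properties of r
  have hr0 : 0 ≤ r := by
    rw [hr]; exact rayleigh_nonneg hEdot hFpd' hn
  have hrF : ∀ u : Fin n → ℝ,
      r * (u ⬝ᵥ (Matrix.diagonal f *ᵥ u)) ≤ u ⬝ᵥ ((M - (Θ + M⁻¹)⁻¹) *ᵥ u) := by
    intro u
    have h1 := sInf_mul_le hEdot hFpd' u
    rw [← hr, hF] at h1
    exact h1
  -- properties of lam and μ
  have hlam_pos : 0 < lam := rayleigh_sInf_pos hM hDpd hn
  have hlamb : ∀ u : Fin n → ℝ,
      lam * (u ⬝ᵥ (Matrix.diagonal d *ᵥ u)) ≤ u ⬝ᵥ (M *ᵥ u) :=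
    sInf_mul_le (fun u => psd_dot hM.posSemidef u) hDpd
  have hμpos : 0 < μ := lt_min hlam_pos one_pos
  have hμ1 : μ ≤ 1 := min_le_right _ _
  have hμlam : μ ≤ lam := min_le_left _ _
  have hc0 : 0 ≤ c := le_min (mul_nonneg hr0 hμpos.le) zero_le_one
  have hc1 : c ≤ 1 := min_le_right _ _
  have hcrμ : c ≤ r * μ := min_le_left _ _
  -- the matrix B = M + Dy
  set B : Matrix (Fin n) (Fin n) ℝ := M + Matrix.diagonal dy with hB
  have hBpd : B.PosDef := hM.add_posSemidef hDypd.posSemidef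
  have hBinv : B⁻¹.PosDef := hBpd.inv
  -- the comparison diagonal matrix K₁ = μ (D + Dy)
  set k : Fin n → ℝ := fun i => μ * (d i + dy i) with hkdef
  have hkpos : ∀ i, 0 < k i := fun i => by
    have := hd i; have := hdy i; have := hμpos; positivity
  have hK₁pd : (Matrix.diagonal k).PosDef := .diagonal hkpos
  have hforms : ∀ u : Fin n → ℝ,
      u ⬝ᵥ (Matrix.diagonal k *ᵥ u) ≤ u ⬝ᵥ (B *ᵥ u) := by
    intro u
    have hDsum : 0 ≤ ∑ i, d i * (u i) ^ 2 :=
      Finset.sum_nonneg fun i _ => by have := hd i; positivity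
    have hDysum : 0 ≤ ∑ i, dy i * (u i) ^ 2 :=
      Finset.sum_nonneg fun i _ => by have := hdy i; positivity
    have hsplit : u ⬝ᵥ (Matrix.diagonal k *ᵥ u) =
        μ * (∑ i, d i * (u i) ^ 2) + μ * (∑ i, dy i * (u i) ^ 2) := by
      rw [diag_form, Finset.mul_sum, Finset.mul_sum, ← Finset.sum_add_distrib]
      exact Finset.sum_congr rfl fun i _ => by simp only [hkdef]; ring
    have hMu : lam * (∑ i, d i * (u i) ^ 2) ≤ u ⬝ᵥ (M *ᵥ u) := by
      have := hlamb u
      rwa [diag_form] at this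
    have hBu : u ⬝ᵥ (B *ᵥ u) = u ⬝ᵥ (M *ᵥ u) + ∑ i, dy i * (u i) ^ 2 := by
      rw [hB, add_mulVec, dotProduct_add, diag_form]
    rw [hsplit, hBu]
    have h1 : μ * (∑ i, d i * (u i) ^ 2) ≤ lam * (∑ i, d i * (u i) ^ 2) :=
      mul_le_mul_of_nonneg_right hμlam hDsum
    have h2 : μ * (∑ i, dy i * (u i) ^ 2) ≤ 1 * (∑ i, dy i * (u i) ^ 2) :=
      mul_le_mul_of_nonneg_right hμ1 hDysum
    linarith
  -- Mhat is the diagonal matrix with entries m i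
  set m : Fin n → ℝ := fun i => Real.sqrt (α⁻¹ * f i) * Real.sqrt (d i + dy i) with hmdef
  have hMhatd : Mhat = Matrix.diagonal m := by
    rw [hMhat]
    funext i
    rw [hF]
    simp [hmdef, Matrix.smul_apply, Matrix.diagonal_apply_eq, Matrix.add_apply, smul_eq_mul]
  have hm2 : ∀ i, (m i) ^ 2 = α⁻¹ * f i * (d i + dy i) := by
    intro i
    rw [hmdef]
    rw [mul_pow, Real.sq_sqrt (by have := hfpos i; positivity),
      Real.sq_sqrt (by have := hd i; have := hdy i; positivity)]
  -- the vectors x and y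
  set x : Fin n → ℝ := Lᵀ *ᵥ v with hx
  set y : Fin n → ℝ := Matrix.diagonal m *ᵥ v with hy
  have hyi : ∀ i, y i = m i * v i := fun i => by
    rw [hy, mulVec_diagonal]
  -- quadratic form of S
  set qx : ℝ := x ⬝ᵥ (B⁻¹ *ᵥ x) with hqx
  set qy : ℝ := y ⬝ᵥ (B⁻¹ *ᵥ y) with hqy
  set eV : ℝ := v ⬝ᵥ ((M - (Θ + M⁻¹)⁻¹) *ᵥ v) with heV
  set fV : ℝ := v ⬝ᵥ (Matrix.diagonal f *ᵥ v) with hfV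
  have hSv : v ⬝ᵥ (S *ᵥ v) = qx + α⁻¹ * eV := by
    rw [hS, add_mulVec, dotProduct_add, smul_mulVec, dotProduct_smul, smul_eq_mul,
      quad_conj]
  -- quadratic form of Shat
  have hShatv : v ⬝ᵥ (Shat *ᵥ v) = (x + y) ⬝ᵥ (B⁻¹ *ᵥ (x + y)) := by
    rw [hShat, quad_conj, transpose_add, add_mulVec, hMhatd, diagonal_transpose]
  -- bound on qy
  have hfV0 : 0 ≤ fV := psd_dot hFpd.posSemidef v
  have hqy_bound : qy ≤ μ⁻¹ * (α⁻¹ * fV) := by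
    have h1 := inv_dot_le hK₁pd hBpd hforms y
    have h2 : y ⬝ᵥ ((Matrix.diagonal k)⁻¹ *ᵥ y) = μ⁻¹ * (α⁻¹ * fV) := by
      rw [diag_inv (fun i => (hkpos i).ne'), diag_form, hfV, diag_form,
        Finset.mul_sum, Finset.mul_sum]
      refine Finset.sum_congr rfl fun i _ => ?_
      rw [hyi i, mul_pow, hm2 i, hkdef]
      have hk' : d i + dy i ≠ 0 := by have := hd i; have := hdy i; positivity
      field_simp
    rw [← h2]
    exact h1
  -- nonnegativity facts
  have hqx0 : 0 ≤ qx := psd_dot hBinv.posSemidef x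
  have hqy0 : 0 ≤ qy := psd_dot hBinv.posSemidef y
  have heV0 : 0 ≤ eV := hEdot v
  have hrFv : r * fV ≤ eV := hrF v
  -- key bound : c * qy ≤ α⁻¹ * eV
  have hkey : c * qy ≤ α⁻¹ * eV := by
    have h6 : c * qy ≤ c * (μ⁻¹ * (α⁻¹ * fV)) := mul_le_mul_of_nonneg_left hqy_bound hc0
    have h7 : c * (μ⁻¹ * (α⁻¹ * fV)) ≤ (r * μ) * (μ⁻¹ * (α⁻¹ * fV)) := by
      refine mul_le_mul_of_nonneg_right hcrμ ?_
      have := inv_nonneg.mpr hμpos.le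
      have := inv_nonneg.mpr hα.le
      positivity
    have h8 : (r * μ) * (μ⁻¹ * (α⁻¹ * fV)) = α⁻¹ * (r * fV) := by
      field_simp
    have h9 : α⁻¹ * (r * fV) ≤ α⁻¹ * eV :=
      mul_le_mul_of_nonneg_left hrFv (inv_nonneg.mpr hα.le)
    linarith
  -- the parallelogram bound
  have hpar : (x + y) ⬝ᵥ (B⁻¹ *ᵥ (x + y)) ≤ 2 * qx + 2 * qy :=
    par hBinv.posSemidef x y
  -- finish
  rw [ge_iff_le, hSv, hShatv]
  have hfinal : 1 / 2 * c * ((x + y) ⬝ᵥ (B⁻¹ *ᵥ (x + y))) ≤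
      1 / 2 * c * (2 * qx + 2 * qy) := by
    refine mul_le_mul_of_nonneg_left hpar ?_
    positivity
  have hexp : 1 / 2 * c * (2 * qx + 2 * qy) = c * qx + c * qy := by ring
  have hcx : c * qx ≤ qx := by nlinarith
  calc 1 / 2 * c * ((x + y) ⬝ᵥ (B⁻¹ *ᵥ (x + y))) ≤ c * qx + c * qy := by
        rw [← hexp]; exact hfinal
    _ ≤ qx + α⁻¹ * eV := by linarith
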